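/- Let ρ be a unitary representation of S_∞ on a complex Hilbert space V. Then ρ admits a continuous extension to the full symmetric group Perm(ℕ) if and only if ⋃_{α ∈ ℕ} V[α] is dense in V. Here a continuous extension means a group homomorphism ρ̄ from Perm(ℕ) to the unitary automorphisms of V such that ρ̄(g) = ρ(g) for all g ∈ S_∞ and such that for every v ∈ V and every ε > 0 there exists α ∈ ℕ with ‖ρ̄(h)v − v‖ < ε for every h ∈ Perm(ℕ) fixing each of the points 0,1,…,α−1. -/

import Mathlib

/-- The subgroup of finitely supported permutations of `ℕ`. -/
def Sinf : Subgroup (Equiv.Perm ℕ) where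
  carrier := {g | {x | g x ≠ x}.Finite}
  one_mem' := by
    show Set.Finite {x | (1 : Equiv.Perm ℕ) x ≠ x}
    convert Set.finite_empty
    ext x; simp
  mul_mem' {f g} hf hg := by
    apply Set.Finite.subset (hf.union hg)
    intro x hx
    simp only [Set.mem_setOf_eq, Set.mem_union, Equiv.Perm.mul_apply] at hx ⊢
    by_contra hc
    push_neg at hc
    rw [hc.2] at hx
    exact hx hc.1
  inv_mem' {g} hg := by
    apply Set.Finite.subset hg
    intro x hx
    simp only [Set.mem_setOf_eq] at hx ⊢
    intro h
    apply hx
    apply g.injective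
    simp [h]

set_option linter.unusedSectionVars false

lemma swap_mem_Sinf (a b : ℕ) : Equiv.swap a b ∈ Sinf := by
  show Set.Finite {x | Equiv.swap a b x ≠ x}
  apply Set.Finite.subset ((Set.finite_singleton b).insert a)
  intro x hx
  simp only [Set.mem_setOf_eq] at hx
  by_contra h
  simp only [Set.mem_insert_iff, Set.mem_singleton_iff] at h
  push_neg at h
  rw [Equiv.swap_apply_of_ne_of_ne h.1 h.2] at hx
  exact hx rfl

lemma exists_extend (g : Equiv.Perm ℕ) (α : ℕ) :
    ∃ h : ↥Sinf, ∀ i < α, (h : Equiv.Perm ℕ) i = g i := by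
  induction α with
  | zero => exact ⟨1, fun i hi => absurd hi (Nat.not_lt_zero i)⟩
  | succ α ih =>
    obtain ⟨h, hh⟩ := ih
    refine ⟨⟨Equiv.swap ((h : Equiv.Perm ℕ) α) (g α), swap_mem_Sinf _ _⟩ * h, ?_⟩
    intro i hi
    have hcoe : ∀ x, ((⟨Equiv.swap ((h : Equiv.Perm ℕ) α) (g α), swap_mem_Sinf _ _⟩ * h :
        ↥Sinf) : Equiv.Perm ℕ) x = Equiv.swap ((h : Equiv.Perm ℕ) α) (g α)
          ((h : Equiv.Perm ℕ) x) := fun x => rfl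
    rw [hcoe]
    rcases Nat.lt_succ_iff_lt_or_eq.1 hi with hi' | hi'
    · rw [hh i hi']
      apply Equiv.swap_apply_of_ne_of_ne
      · intro he
        have : (h : Equiv.Perm ℕ) i = (h : Equiv.Perm ℕ) α := by rw [hh i hi', he]
        exact absurd ((h : Equiv.Perm ℕ).injective this) (Nat.ne_of_lt hi')
      · exact fun he => absurd (g.injective he) (Nat.ne_of_lt hi')
    · subst hi'
      exact Equiv.swap_apply_left _ _

section

variable {V : Type*} [NormedAddCommGroup V] [InnerProductSpace ℂ V] [CompleteSpace V]

/-- `V[α]`: the closed subspace of vectors fixed by `ρ(h)` for every finitely supported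
permutation `h` fixing the points `0, 1, …, α-1`. -/
def fixedVectorsS (ρ : ↥Sinf →* (V ≃ₗᵢ[ℂ] V)) (α : ℕ) : Set V :=
  {v | ∀ h : ↥Sinf, (∀ i < α, (h : Equiv.Perm ℕ) i = i) → ρ h v = v}

/-- `ρ̄ : Perm(ℕ) → U(V)` is a continuous extension of `ρ : S_∞ → U(V)`:
it extends `ρ` and is continuous in the topology of pointwise convergence, i.e. for each
`v ∈ V` and `ε > 0` there is `α` with `‖ρ̄(h)v - v‖ < ε` for every `h` fixing `0,…,α-1`. -/
def IsContinuousExtension (ρ : ↥Sinf →* (V ≃ₗᵢ[ℂ] V))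
    (ρb : Equiv.Perm ℕ →* (V ≃ₗᵢ[ℂ] V)) : Prop :=
  (∀ g : ↥Sinf, ρb (g : Equiv.Perm ℕ) = ρ g) ∧
    ∀ v : V, ∀ ε : ℝ, 0 < ε → ∃ α : ℕ, ∀ h : Equiv.Perm ℕ,
      (∀ i < α, h i = i) → ‖ρb h v - v‖ < ε

end

section

variable {V : Type*} [NormedAddCommGroup V] [InnerProductSpace ℂ V] [CompleteSpace V]

variable {ρ : ↥Sinf →* (V ≃ₗᵢ[ℂ] V)}

lemma fixedVectorsS_mono {α β : ℕ} (hab : α ≤ β) :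
    fixedVectorsS ρ α ⊆ fixedVectorsS ρ β := fun v hv h hh =>
  hv h (fun i hi => hh i (lt_of_lt_of_le hi hab))

lemma rho_congr {α : ℕ} {v : V} (hv : v ∈ fixedVectorsS ρ α) (h₁ h₂ : ↥Sinf)
    (hh : ∀ i < α, (h₁ : Equiv.Perm ℕ) i = (h₂ : Equiv.Perm ℕ) i) :
    ρ h₁ v = ρ h₂ v := by
  have key : ρ (h₂⁻¹ * h₁) v = v := by
    apply hv
    intro i hi
    show (h₂ : Equiv.Perm ℕ)⁻¹ ((h₁ : Equiv.Perm ℕ) i) = i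
    rw [hh i hi]
    exact (h₂ : Equiv.Perm ℕ).symm_apply_apply i
  calc ρ h₁ v = ρ (h₂ * (h₂⁻¹ * h₁)) v := by rw [mul_inv_cancel_left]
  _ = ρ h₂ (ρ (h₂⁻¹ * h₁) v) := by rw [map_mul]; rfl
  _ = ρ h₂ v := by rw [key]

lemma rho_mem_fixed {α β : ℕ} {v : V} (hv : v ∈ fixedVectorsS ρ α) (h : ↥Sinf)
    (hβ : ∀ i < α, (h : Equiv.Perm ℕ) i < β) :
    ρ h v ∈ fixedVectorsS ρ β := by
  intro k hk
  have h1 : ρ k (ρ h v) = ρ (k * h) v := by rw [map_mul]; rfl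
  have h2 : ρ (k * h) v = ρ (h * (h⁻¹ * k * h)) v := by group
  have h3 : ρ (h⁻¹ * k * h) v = v := by
    apply hv
    intro i hi
    show (h : Equiv.Perm ℕ)⁻¹ ((k : Equiv.Perm ℕ) ((h : Equiv.Perm ℕ) i)) = i
    rw [hk _ (hβ i hi)]
    exact (h : Equiv.Perm ℕ).symm_apply_apply i
  rw [h1, h2, map_mul]
  show ρ h (ρ (h⁻¹ * k * h) v) = ρ h v
  rw [h3]

def unionSub (ρ : ↥Sinf →* (V ≃ₗᵢ[ℂ] V)) : Submodule ℂ V where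
  carrier := ⋃ α : ℕ, fixedVectorsS ρ α
  zero_mem' := Set.mem_iUnion.2 ⟨0, fun h _ => map_zero (ρ h)⟩
  add_mem' := by
    rintro a b ha hb
    obtain ⟨α, hα⟩ := Set.mem_iUnion.1 ha
    obtain ⟨β, hβ⟩ := Set.mem_iUnion.1 hb
    refine Set.mem_iUnion.2 ⟨max α β, fun h hh => ?_⟩
    rw [map_add, fixedVectorsS_mono (le_max_left α β) hα h hh,
      fixedVectorsS_mono (le_max_right α β) hβ h hh]
  smul_mem' := by
    rintro c a ha
    obtain ⟨α, hα⟩ := Set.mem_iUnion.1 ha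
    refine Set.mem_iUnion.2 ⟨α, fun h hh => ?_⟩
    rw [map_smul, hα h hh]

end

section

variable {V : Type*} [NormedAddCommGroup V] [InnerProductSpace ℂ V] [CompleteSpace V]
variable (ρ : ↥Sinf →* (V ≃ₗᵢ[ℂ] V))

noncomputable def Phi (g : Equiv.Perm ℕ) (v : V) : V :=
  @dite _ (∃ α, v ∈ fixedVectorsS ρ α) (Classical.dec _)
    (fun hv => ρ (exists_extend g hv.choose).choose v) (fun _ => 0)

variable {ρ}

lemma Phi_eq {g : Equiv.Perm ℕ} {v : V} {α : ℕ} (hα : v ∈ fixedVectorsS ρ α)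
    (h : ↥Sinf) (hh : ∀ i < α, (h : Equiv.Perm ℕ) i = g i) :
    Phi ρ g v = ρ h v := by
  have hv : ∃ β, v ∈ fixedVectorsS ρ β := ⟨α, hα⟩
  rw [Phi, dif_pos hv]
  set α₀ := hv.choose with hα₀def
  have hα₀ : v ∈ fixedVectorsS ρ α₀ := hv.choose_spec
  set h₀ := (exists_extend g α₀).choose with hh₀def
  have hh₀ : ∀ i < α₀, (h₀ : Equiv.Perm ℕ) i = g i := (exists_extend g α₀).choose_spec
  obtain ⟨h', hh'⟩ := exists_extend g (max α α₀)
  have e1 : ρ h₀ v = ρ h' v := by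
    apply rho_congr hα₀
    intro i hi
    rw [hh₀ i hi, hh' i (lt_of_lt_of_le hi (le_max_right α α₀))]
  have e2 : ρ h v = ρ h' v := by
    apply rho_congr hα
    intro i hi
    rw [hh i hi, hh' i (lt_of_lt_of_le hi (le_max_left α α₀))]
  rw [e1, ← e2]

lemma Phi_mem {g : Equiv.Perm ℕ} {v : V} (hv : v ∈ unionSub ρ) :
    Phi ρ g v ∈ unionSub ρ := by
  obtain ⟨α, hα⟩ := Set.mem_iUnion.1 hv
  obtain ⟨h, hh⟩ := exists_extend g α
  rw [Phi_eq hα h hh]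
  obtain ⟨β, hβ⟩ : ∃ β, ∀ i < α, (h : Equiv.Perm ℕ) i < β :=
    ⟨((Finset.range α).sup fun i => (h : Equiv.Perm ℕ) i) + 1, fun i hi =>
      Nat.lt_succ_of_le (Finset.le_sup (Finset.mem_range.2 hi))⟩
  exact Set.mem_iUnion.2 ⟨β, rho_mem_fixed hα h hβ⟩

variable (ρ) in
/-- The densely defined linear isometry giving the extension at `g`. -/
noncomputable def TL (g : Equiv.Perm ℕ) : ↥(unionSub ρ) →ₗ[ℂ] V where
  toFun u := Phi ρ g (u : V)
  map_add' u w := by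
    obtain ⟨α, hα⟩ := Set.mem_iUnion.1 u.2
    obtain ⟨β, hβ⟩ := Set.mem_iUnion.1 w.2
    obtain ⟨h, hh⟩ := exists_extend g (max α β)
    have hu : (u : V) ∈ fixedVectorsS ρ (max α β) := fixedVectorsS_mono (le_max_left _ _) hα
    have hw : (w : V) ∈ fixedVectorsS ρ (max α β) := fixedVectorsS_mono (le_max_right _ _) hβ
    have huw : ((u : V) + (w : V)) ∈ fixedVectorsS ρ (max α β) := by
      intro k hk
      rw [map_add, hu k hk, hw k hk]
    show Phi ρ g ((u : V) + (w : V)) = Phi ρ g (u : V) + Phi ρ g (w : V)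
    rw [Phi_eq huw h hh, Phi_eq hu h hh, Phi_eq hw h hh]
    exact map_add (ρ h) _ _
  map_smul' c u := by
    obtain ⟨α, hα⟩ := Set.mem_iUnion.1 u.2
    obtain ⟨h, hh⟩ := exists_extend g α
    have hcu : (c • (u : V)) ∈ fixedVectorsS ρ α := by
      intro k hk
      rw [map_smul, hα k hk]
    show Phi ρ g (c • (u : V)) = c • Phi ρ g (u : V)
    rw [Phi_eq hcu h hh, Phi_eq hα h hh]
    exact map_smul (ρ h) _ _

lemma TL_norm (g : Equiv.Perm ℕ) (u : ↥(unionSub ρ)) : ‖TL ρ g u‖ = ‖u‖ := by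
  obtain ⟨α, hα⟩ := Set.mem_iUnion.1 u.2
  obtain ⟨h, hh⟩ := exists_extend g α
  show ‖Phi ρ g (u : V)‖ = ‖u‖
  rw [Phi_eq hα h hh]
  exact (ρ h).norm_map _

variable (ρ) in
noncomputable def TCmap (g : Equiv.Perm ℕ) : ↥(unionSub ρ) →L[ℂ] V :=
  (TL ρ g).mkContinuous 1 fun u => by rw [TL_norm, one_mul]

end

section

variable {V : Type*} [NormedAddCommGroup V] [InnerProductSpace ℂ V] [CompleteSpace V]
variable {ρ : ↥Sinf →* (V ≃ₗᵢ[ℂ] V)}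

variable (ρ) in
noncomputable def rhoBar0 (hd : Dense (⋃ α : ℕ, fixedVectorsS ρ α)) (g : Equiv.Perm ℕ) :
    V →L[ℂ] V :=
  (TCmap ρ g).extend (unionSub ρ).subtypeL

variable {hd : Dense (⋃ α : ℕ, fixedVectorsS ρ α)}

lemma rhoBar0_apply_mem {g : Equiv.Perm ℕ} {v : V} (hv : v ∈ unionSub ρ) :
    rhoBar0 ρ hd g v = Phi ρ g v := by
  have := ContinuousLinearMap.extend_eq (TCmap ρ g) (e := (unionSub ρ).subtypeL) hd.denseRange_val
    isUniformEmbedding_subtype_val.isUniformInducing ⟨v, hv⟩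
  exact this

lemma rhoBar0_norm (g : Equiv.Perm ℕ) (v : V) : ‖rhoBar0 ρ hd g v‖ = ‖v‖ := by
  have hclosed : IsClosed {w : V | ‖rhoBar0 ρ hd g w‖ = ‖w‖} :=
    isClosed_eq (rhoBar0 ρ hd g).continuous.norm continuous_norm
  have hsub : (⋃ α : ℕ, fixedVectorsS ρ α) ⊆ {w : V | ‖rhoBar0 ρ hd g w‖ = ‖w‖} := by
    intro w hw
    have : w ∈ unionSub ρ := hw
    show ‖rhoBar0 ρ hd g w‖ = ‖w‖
    rw [rhoBar0_apply_mem this]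
    exact TL_norm g ⟨w, this⟩
  have : closure (⋃ α : ℕ, fixedVectorsS ρ α) ⊆ {w : V | ‖rhoBar0 ρ hd g w‖ = ‖w‖} :=
    hclosed.closure_subset_iff.2 hsub
  exact this (by rw [hd.closure_eq]; trivial)

lemma rhoBar0_ext {g : Equiv.Perm ℕ} {f : V →L[ℂ] V}
    (hf : ∀ v, v ∈ unionSub ρ → f v = Phi ρ g v) : rhoBar0 ρ hd g = f := by
  ext v
  have hclosed : IsClosed {w : V | rhoBar0 ρ hd g w = f w} :=
    isClosed_eq (rhoBar0 ρ hd g).continuous f.continuous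
  have hsub : (⋃ α : ℕ, fixedVectorsS ρ α) ⊆ {w : V | rhoBar0 ρ hd g w = f w} := by
    intro w hw
    have hw' : w ∈ unionSub ρ := hw
    show rhoBar0 ρ hd g w = f w
    rw [rhoBar0_apply_mem hw', hf w hw']
  exact (hclosed.closure_subset_iff.2 hsub) (by rw [hd.closure_eq]; trivial)

lemma rhoBar0_one : rhoBar0 ρ hd 1 = ContinuousLinearMap.id ℂ V := by
  apply rhoBar0_ext
  intro v hv
  obtain ⟨α, hα⟩ := Set.mem_iUnion.1 hv
  rw [Phi_eq (g := (1 : Equiv.Perm ℕ)) hα 1 (fun i _ => rfl)]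
  show v = ρ 1 v
  rw [map_one]; rfl

lemma rhoBar0_mul (g g' : Equiv.Perm ℕ) :
    rhoBar0 ρ hd (g * g') = (rhoBar0 ρ hd g).comp (rhoBar0 ρ hd g') := by
  apply rhoBar0_ext
  intro v hv
  obtain ⟨α, hα⟩ := Set.mem_iUnion.1 hv
  obtain ⟨h', hh'⟩ := exists_extend g' α
  obtain ⟨β, hβ⟩ : ∃ β, ∀ i < α, (h' : Equiv.Perm ℕ) i < β :=
    ⟨((Finset.range α).sup fun i => (h' : Equiv.Perm ℕ) i) + 1, fun i hi =>
      Nat.lt_succ_of_le (Finset.le_sup (Finset.mem_range.2 hi))⟩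
  obtain ⟨h, hh⟩ := exists_extend g β
  have hmem : ρ h' v ∈ fixedVectorsS ρ β := rho_mem_fixed hα h' hβ
  have step1 : rhoBar0 ρ hd g' v = ρ h' v := by
    rw [rhoBar0_apply_mem hv, Phi_eq hα h' hh']
  have step2 : rhoBar0 ρ hd g (ρ h' v) = ρ h (ρ h' v) := by
    rw [rhoBar0_apply_mem (Set.mem_iUnion.2 ⟨β, hmem⟩ : ρ h' v ∈ unionSub ρ),
      Phi_eq hmem h (fun i hi => hh i hi)]
  show (rhoBar0 ρ hd g) (rhoBar0 ρ hd g' v) = Phi ρ (g * g') v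
  have hmul : ∀ i < α, ((h * h' : ↥Sinf) : Equiv.Perm ℕ) i = (g * g') i := by
    intro i hi
    show (h : Equiv.Perm ℕ) ((h' : Equiv.Perm ℕ) i) = g (g' i)
    rw [hh _ (hβ i hi), hh' i hi]
  rw [Phi_eq hα (h * h') hmul, step1, step2]
  show ρ h (ρ h' v) = ρ (h * h') v
  rw [map_mul]; rfl

end

section

variable {V : Type*} [NormedAddCommGroup V] [InnerProductSpace ℂ V] [CompleteSpace V]
variable {ρ : ↥Sinf →* (V ≃ₗᵢ[ℂ] V)}

variable (ρ) in
noncomputable def rhoBarE (hd : Dense (⋃ α : ℕ, fixedVectorsS ρ α)) (g : Equiv.Perm ℕ) :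
    V ≃ₗᵢ[ℂ] V where
  toLinearEquiv := LinearEquiv.ofLinear (rhoBar0 ρ hd g).toLinearMap
    (rhoBar0 ρ hd g⁻¹).toLinearMap
    (by
      have : rhoBar0 ρ hd g ∘L rhoBar0 ρ hd g⁻¹ = ContinuousLinearMap.id ℂ V := by
        rw [← rhoBar0_mul, mul_inv_cancel, rhoBar0_one]
      ext v
      exact ContinuousLinearMap.ext_iff.1 this v)
    (by
      have : rhoBar0 ρ hd g⁻¹ ∘L rhoBar0 ρ hd g = ContinuousLinearMap.id ℂ V := by
        rw [← rhoBar0_mul, inv_mul_cancel, rhoBar0_one]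
      ext v
      exact ContinuousLinearMap.ext_iff.1 this v)
  norm_map' := fun v => rhoBar0_norm (hd := hd) g v

lemma rhoBarE_apply (hd : Dense (⋃ α : ℕ, fixedVectorsS ρ α)) (g : Equiv.Perm ℕ) (v : V) :
    rhoBarE ρ hd g v = rhoBar0 ρ hd g v := by
  simp only [rhoBarE, LinearIsometryEquiv.coe_mk, LinearEquiv.ofLinear_apply,
    ContinuousLinearMap.coe_coe]
  rfl

variable (ρ) in
noncomputable def rhoBarM (hd : Dense (⋃ α : ℕ, fixedVectorsS ρ α)) :
    Equiv.Perm ℕ →* (V ≃ₗᵢ[ℂ] V) where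
  toFun := rhoBarE ρ hd
  map_one' := by
    apply LinearIsometryEquiv.ext
    intro v
    rw [rhoBarE_apply, rhoBar0_one]
    rfl
  map_mul' g g' := by
    apply LinearIsometryEquiv.ext
    intro v
    rw [LinearIsometryEquiv.coe_mul, Function.comp_apply, rhoBarE_apply, rhoBarE_apply,
      rhoBarE_apply, rhoBar0_mul]
    rfl

end

section

variable {V : Type*} [NormedAddCommGroup V] [InnerProductSpace ℂ V] [CompleteSpace V]
variable {ρ : ↥Sinf →* (V ≃ₗᵢ[ℂ] V)}

lemma rhoBarM_extends (hd : Dense (⋃ α : ℕ, fixedVectorsS ρ α)) (g : ↥Sinf) :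
    rhoBarM ρ hd (g : Equiv.Perm ℕ) = ρ g := by
  have hCLM : rhoBar0 ρ hd (g : Equiv.Perm ℕ) =
      (ρ g).toLinearIsometry.toContinuousLinearMap := by
    apply rhoBar0_ext
    intro v hv
    obtain ⟨α, hα⟩ := Set.mem_iUnion.1 hv
    rw [Phi_eq hα g (fun i _ => rfl)]
    rfl
  apply LinearIsometryEquiv.ext
  intro v
  have : rhoBarM ρ hd (g : Equiv.Perm ℕ) v = rhoBar0 ρ hd (g : Equiv.Perm ℕ) v :=
    rhoBarE_apply hd _ v
  rw [this, hCLM]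
  rfl

lemma rhoBarM_continuous (hd : Dense (⋃ α : ℕ, fixedVectorsS ρ α)) (v : V) (ε : ℝ)
    (hε : 0 < ε) : ∃ α : ℕ, ∀ h : Equiv.Perm ℕ,
      (∀ i < α, h i = i) → ‖rhoBarM ρ hd h v - v‖ < ε := by
  have hv : v ∈ closure (⋃ α : ℕ, fixedVectorsS ρ α) := hd v
  rw [Metric.mem_closure_iff] at hv
  obtain ⟨w, hw, hdist⟩ := hv (ε / 2) (by linarith)
  obtain ⟨α, hα⟩ := Set.mem_iUnion.1 hw
  refine ⟨α, fun h hh => ?_⟩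
  have hwU : w ∈ unionSub ρ := hw
  have hfix : rhoBarM ρ hd h w = w := by
    show rhoBarE ρ hd h w = w
    rw [rhoBarE_apply hd h w, rhoBar0_apply_mem hwU]
    obtain ⟨h', hh'⟩ := exists_extend h α
    rw [Phi_eq hα h' hh']
    exact hα h' (fun i hi => by rw [hh' i hi, hh i hi])
  have hnorm : ‖rhoBarM ρ hd h v - rhoBarM ρ hd h w‖ = ‖v - w‖ := by
    rw [← map_sub]
    exact (rhoBarM ρ hd h).norm_map _
  have hvw : ‖v - w‖ < ε / 2 := by rwa [← dist_eq_norm]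
  calc ‖rhoBarM ρ hd h v - v‖
      = ‖(rhoBarM ρ hd h v - rhoBarM ρ hd h w) + (w - v)‖ := by rw [hfix]; congr 1; abel
    _ ≤ ‖rhoBarM ρ hd h v - rhoBarM ρ hd h w‖ + ‖w - v‖ := norm_add_le _ _
    _ = ‖v - w‖ + ‖w - v‖ := by rw [hnorm]
    _ < ε := by rw [norm_sub_rev w v]; linarith

end

section

variable {V : Type*} [NormedAddCommGroup V] [InnerProductSpace ℂ V] [CompleteSpace V]
variable {ρ : ↥Sinf →* (V ≃ₗᵢ[ℂ] V)}

lemma dense_of_extension {ρb : Equiv.Perm ℕ →* (V ≃ₗᵢ[ℂ] V)}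
    (hext : IsContinuousExtension ρ ρb) : Dense (⋃ α : ℕ, fixedVectorsS ρ α) := by
  intro v
  rw [Metric.mem_closure_iff]
  intro ε hε
  obtain ⟨α, hα⟩ := hext.2 v (ε / 2) (by linarith)
  set S : Set V := {w | ∃ h : ↥Sinf, (∀ i < α, (h : Equiv.Perm ℕ) i = i) ∧ ρ h v = w} with hS
  set K : Set V := closure (convexHull ℝ S) with hK
  have hvS : v ∈ S := ⟨1, fun i _ => rfl, by rw [map_one]; rfl⟩
  have hSball : S ⊆ Metric.closedBall v (ε / 2) := by
    rintro w ⟨h, hh, rfl⟩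
    rw [Metric.mem_closedBall, dist_eq_norm]
    have := hα (h : Equiv.Perm ℕ) hh
    rw [hext.1 h] at this
    exact le_of_lt this
  have hKball : K ⊆ Metric.closedBall v (ε / 2) :=
    closure_minimal (convexHull_min hSball (convex_closedBall v _)) Metric.isClosed_closedBall
  have hKconv : Convex ℝ K := (convex_convexHull ℝ S).closure
  have hKne : K.Nonempty := ⟨v, subset_closure (subset_convexHull ℝ S hvS)⟩
  letI : InnerProductSpace ℝ V := InnerProductSpace.rclikeToReal ℂ V
  obtain ⟨m, hmK, hmmin⟩ := exists_norm_eq_iInf_of_complete_convex hKne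
    isClosed_closure.isComplete hKconv 0
  set δ : ℝ := ⨅ w : K, ‖(0 : V) - w‖ with hδ
  have hδle : ∀ x ∈ K, δ ≤ ‖x‖ := by
    intro x hx
    have : δ ≤ ‖(0 : V) - x‖ :=
      ciInf_le ⟨0, Set.forall_mem_range.2 fun _ => norm_nonneg _⟩ (⟨x, hx⟩ : K)
    rwa [zero_sub, norm_neg] at this
  have hmnorm : ‖m‖ = δ := by rw [← norm_neg, ← zero_sub]; exact hmmin
  have hinv : ∀ k : ↥Sinf, (∀ i < α, (k : Equiv.Perm ℕ) i = i) → ∀ x ∈ K, ρ k x ∈ K := by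
    intro k hk x hx
    set f : V →ₗ[ℝ] V := ((ρ k).toLinearEquiv.toLinearMap.restrictScalars ℝ) with hf
    have hfS : f '' S ⊆ S := by
      rintro w ⟨u, ⟨h, hh, rfl⟩, rfl⟩
      refine ⟨k * h, fun i hi => ?_, ?_⟩
      · show (k : Equiv.Perm ℕ) ((h : Equiv.Perm ℕ) i) = i
        rw [hh i hi, hk i hi]
      · show ρ (k * h) v = f (ρ h v)
        rw [map_mul]
        rfl
    have himg : f '' K ⊆ K := by
      calc f '' K ⊆ closure (f '' convexHull ℝ S) :=
            image_closure_subset_closure_image (ρ k).continuous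
        _ = closure (convexHull ℝ (f '' S)) := by rw [f.image_convexHull]
        _ ⊆ closure (convexHull ℝ S) := closure_mono (convexHull_mono hfS)
    exact himg ⟨x, hx, rfl⟩
  have hfixed : ∀ k : ↥Sinf, (∀ i < α, (k : Equiv.Perm ℕ) i = i) → ρ k m = m := by
    intro k hk
    set b : V := ρ k m with hb
    have hbK : b ∈ K := hinv k hk m hmK
    have hbnorm : ‖b‖ = δ := by rw [hb, (ρ k).norm_map, hmnorm]
    have hmid : (1 / 2 : ℝ) • m + (1 / 2 : ℝ) • b ∈ K :=
      hKconv hmK hbK (by norm_num) (by norm_num) (by norm_num)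
    have hmid_norm : δ ≤ (1 / 2 : ℝ) * ‖m + b‖ := by
      have h1 : (1 / 2 : ℝ) • m + (1 / 2 : ℝ) • b = (1 / 2 : ℝ) • (m + b) := by
        rw [smul_add]
      have := hδle _ hmid
      rwa [h1, norm_smul, Real.norm_eq_abs, abs_of_pos (by norm_num : (0:ℝ) < 1/2)] at this
    have hpar := parallelogram_law_with_norm ℂ m b
    have hδ0 : 0 ≤ δ := hmnorm ▸ norm_nonneg m
    have hsub : ‖m - b‖ = 0 := by nlinarith [norm_nonneg (m - b), norm_nonneg (m + b)]
    have := sub_eq_zero.1 (norm_eq_zero.1 hsub)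
    exact this.symm
  have hmfix : m ∈ fixedVectorsS ρ α := fun k hk => hfixed k hk
  refine ⟨m, Set.mem_iUnion.2 ⟨α, hmfix⟩, ?_⟩
  have : dist m v ≤ ε / 2 := Metric.mem_closedBall.1 (hKball hmK)
  rw [dist_comm] at this
  linarith

end


/-- A unitary representation `ρ` of `S_∞` on a complex Hilbert space `V`
admits a continuous extension to the full symmetric group `Perm(ℕ)` if and only if
`⋃_α V[α]` is dense in `V`. -/
theorem extension_iff_dense_union_of_fixedVectors
    {V : Type*} [NormedAddCommGroup V] [InnerProductSpace ℂ V] [CompleteSpace V]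
    (ρ : ↥Sinf →* (V ≃ₗᵢ[ℂ] V)) :
    (∃ ρb : Equiv.Perm ℕ →* (V ≃ₗᵢ[ℂ] V), IsContinuousExtension ρ ρb) ↔
      Dense (⋃ α : ℕ, fixedVectorsS ρ α) := by
  constructor
  · rintro ⟨ρb, hext⟩
    exact dense_of_extension hext
  · intro hd
    exact ⟨rhoBarM ρ hd, rhoBarM_extends hd, rhoBarM_continuous hd⟩
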